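/- Let X and Y be nonzero real or complex Banach spaces. If the direct sum X ⊕_∞ Y (the product X × Y with the norm ‖(x, y)‖ = max{‖x‖, ‖y‖}) is lush, then both X and Y are lush. -/

import Mathlib

open scoped BigOperators

/-- The open slice `S(B_X, f, α) = {x ∈ B_X : Re f(x) > 1 - α}` of the closed unit ball. -/
def Slice (𝕜 : Type*) {X : Type*} [RCLike 𝕜] [NormedAddCommGroup X] [NormedSpace 𝕜 X]
    (f : X →L[𝕜] 𝕜) (α : ℝ) : Set X :=
  {x | ‖x‖ ≤ 1 ∧ 1 - α < RCLike.re (f x)}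

/-- The convex hull of `𝕋 · S(B_X, f, α)`, i.e. all convex combinations of rotated points of
the slice `S(B_X, f, α)`. -/
def ConvRotSlice (𝕜 : Type*) {X : Type*} [RCLike 𝕜] [NormedAddCommGroup X] [NormedSpace 𝕜 X]
    (f : X →L[𝕜] 𝕜) (α : ℝ) : Set X :=
  {x | ∃ (n : ℕ) (t : Fin n → ℝ) (ω : Fin n → 𝕜) (s : Fin n → X),
    (∀ k, 0 ≤ t k) ∧ (∑ k, t k) = 1 ∧ (∀ k, ‖ω k‖ = 1) ∧ (∀ k, s k ∈ Slice 𝕜 f α) ∧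
    x = ∑ k, ((t k : 𝕜) * ω k) • s k}

/-- A Banach space `X` over `𝕜 = ℝ` or `ℂ` is *lush* if for all `u, v` in the unit sphere and
every `ε > 0` there is a norm-one functional `f` with `u ∈ S(B_X, f, ε)` and
`dist(v, conv(𝕋 · S(B_X, f, ε))) < ε`. -/
def IsLush (𝕜 X : Type*) [RCLike 𝕜] [NormedAddCommGroup X] [NormedSpace 𝕜 X] : Prop :=
  ∀ u v : X, ‖u‖ = 1 → ‖v‖ = 1 → ∀ ε : ℝ, 0 < ε →
    ∃ f : X →L[𝕜] 𝕜, ‖f‖ = 1 ∧ u ∈ Slice 𝕜 f ε ∧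
      Metric.infDist v (ConvRotSlice 𝕜 f ε) < ε

set_option maxHeartbeats 1000000

-- auxiliary
lemma exists_unit_mul_eq_norm {𝕜 : Type*} [RCLike 𝕜] (a : 𝕜) :
    ∃ ω : 𝕜, ‖ω‖ = 1 ∧ ω * a = (‖a‖ : 𝕜) := by
  rcases eq_or_ne a 0 with rfl | ha
  · exact ⟨1, by simp⟩
  · refine ⟨(‖a‖ : 𝕜) / a, ?_, by field_simp⟩
    rw [norm_div, RCLike.norm_ofReal, abs_of_nonneg (norm_nonneg a),
      div_self (norm_ne_zero_iff.mpr ha)]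

/-- Abstract transfer lemma: lushness passes to a 1-complemented subspace whose
complementary projection satisfies an `ℓ₁`-type dual estimate. -/
lemma isLush_of_retract {𝕜 Z X : Type*} [RCLike 𝕜]
    [NormedAddCommGroup Z] [NormedSpace 𝕜 Z]
    [NormedAddCommGroup X] [NormedSpace 𝕜 X]
    (hZ : IsLush 𝕜 Z) (ι : X →L[𝕜] Z) (π : Z →L[𝕜] X)
    (hπι : ∀ x, π (ι x) = x) (hι : ∀ x, ‖ι x‖ = ‖x‖) (hπ : ∀ z, ‖π z‖ ≤ ‖z‖)
    (hdual : ∀ F : Z →L[𝕜] 𝕜, ‖F‖ = 1 → ∀ z : Z, ‖z‖ ≤ 1 →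
      ‖F.comp ι‖ + ‖F z - F (ι (π z))‖ ≤ 1) :
    IsLush 𝕜 X := by
  intro u v hu hv ε hε
  set ε' : ℝ := min ε 1 / 2 with hε'def
  have hε'pos : 0 < ε' := by positivity
  have hε'le : ε' ≤ ε / 2 := by
    have := min_le_left ε 1; simp only [hε'def]; linarith
  have hε'half : ε' ≤ 1 / 2 := by
    have := min_le_right ε 1; simp only [hε'def]; linarith
  clear_value ε'
  obtain ⟨F, hF, ⟨hFu1, hFu2⟩, hdist⟩ := hZ (ι u) (ι v) (by rw [hι, hu]) (by rw [hι, hv]) ε' hε'pos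
  set f : X →L[𝕜] 𝕜 := F.comp ι with hfdef
  have hfle : ‖f‖ ≤ 1 := by
    refine ContinuousLinearMap.opNorm_le_bound _ zero_le_one fun x => ?_
    calc ‖F (ι x)‖ ≤ ‖F‖ * ‖ι x‖ := F.le_opNorm _
      _ = 1 * ‖x‖ := by rw [hF, hι]
  set c : ℝ := ‖f‖ with hcdef
  have hfu : 1 - ε' < RCLike.re (f u) := hFu2
  clear_value f
  have hc1 : 1 - ε' < c := by
    have : RCLike.re (f u) ≤ ‖f u‖ := RCLike.re_le_norm _
    have h2 : ‖f u‖ ≤ ‖f‖ * ‖u‖ := f.le_opNorm u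
    rw [hu, mul_one] at h2; linarith
  have hchalf : (1:ℝ)/2 < c := by linarith
  have hcpos : 0 < c := by linarith
  have hcle : c ≤ 1 := hfle
  clear_value c
  set g : X →L[𝕜] 𝕜 := ((c : 𝕜)⁻¹) • f with hgdef
  have hg : ‖g‖ = 1 := by
    have hns := norm_smul ((c : 𝕜)⁻¹) f
    rw [hgdef, hns, norm_inv, RCLike.norm_ofReal, abs_of_pos hcpos, ← hcdef,
      inv_mul_cancel₀ (ne_of_gt hcpos)]
  have hre : ∀ w : 𝕜, RCLike.re (((c : 𝕜)⁻¹) * w) = c⁻¹ * RCLike.re w := by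
    intro w; rw [← RCLike.ofReal_inv, RCLike.re_ofReal_mul]
  have hgapp : ∀ x, RCLike.re (g x) = c⁻¹ * RCLike.re (f x) := by
    intro x; simp only [hgdef, ContinuousLinearMap.smul_apply, smul_eq_mul, hre]
  clear_value g
  -- slice transfer
  have hslice : ∀ z : Z, z ∈ Slice 𝕜 F ε' → π z ∈ Slice 𝕜 g ε := by
    rintro z ⟨hz1, hz2⟩
    refine ⟨le_trans (hπ z) hz1, ?_⟩
    have hFz : RCLike.re (F (z - ι (π z))) ≤ 1 - c := by
      have h1 : RCLike.re (F (z - ι (π z))) ≤ ‖F (z - ι (π z))‖ := RCLike.re_le_norm _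
      have h2 := hdual F hF z hz1
      rw [← hfdef, ← hcdef] at h2
      have h4 : ‖F (z - ι (π z))‖ = ‖F z - F (ι (π z))‖ := by rw [map_sub]
      linarith
    have hsub : RCLike.re (f (π z)) = RCLike.re (F z) - RCLike.re (F (z - ι (π z))) := by
      have h5 : F (z - ι (π z)) = F z - F (ι (π z)) := map_sub F _ _
      rw [h5, map_sub (RCLike.re (K := 𝕜))]
      simp only [hfdef, ContinuousLinearMap.comp_apply]
      ring
    have hflow : c - ε' < RCLike.re (f (π z)) := by rw [hsub]; linarith
    have hmul : c⁻¹ * (c - ε') < c⁻¹ * RCLike.re (f (π z)) :=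
      mul_lt_mul_of_pos_left hflow (by positivity)
    rw [hgapp]
    have hci : c * c⁻¹ = 1 := mul_inv_cancel₀ (ne_of_gt hcpos)
    have hinv2 : c⁻¹ ≤ 2 := by nlinarith [inv_pos.mpr hcpos]
    nlinarith [hε'pos, hε'le]
  refine ⟨g, hg, ?_, ?_⟩
  · -- u in slice
    refine ⟨le_of_eq hu, ?_⟩
    rw [hgapp]
    have h1 : c⁻¹ * (1 - ε') ≤ c⁻¹ * RCLike.re (f u) :=
      mul_le_mul_of_nonneg_left (le_of_lt hfu) (by positivity)
    have h2 : 1 - ε' ≤ c⁻¹ * (1 - ε') := by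
      have hci : 1 ≤ c⁻¹ := one_le_inv_iff₀.mpr ⟨hcpos, hcle⟩
      nlinarith
    have hfu' : c⁻¹ * (1 - ε') < c⁻¹ * RCLike.re (f u) :=
      mul_lt_mul_of_pos_left hfu (by positivity)
    have : 1 - ε ≤ 1 - ε' := by linarith
    linarith
  · -- distance estimate
    have hne : (ConvRotSlice 𝕜 F ε').Nonempty := by
      refine ⟨ι u, 1, fun _ => 1, fun _ => 1, fun _ => ι u, fun _ => zero_le_one, by simp,
        fun _ => norm_one, fun _ => ⟨by rw [hι, hu], hFu2⟩, by simp⟩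
    obtain ⟨w, hw, hwd⟩ := (Metric.infDist_lt_iff hne).mp hdist
    obtain ⟨n, t, ω, s, ht0, ht1, hω, hs, hweq⟩ := hw
    have hπw : π w ∈ ConvRotSlice 𝕜 g ε := by
      refine ⟨n, t, ω, fun k => π (s k), ht0, ht1, hω, fun k => hslice _ (hs k), ?_⟩
      rw [hweq, map_sum]
      simp only [map_smul]
    have hdist2 : dist v (π w) < ε := by
      have : dist v (π w) ≤ dist (ι v) w := by
        rw [dist_eq_norm, dist_eq_norm]
        calc ‖v - π w‖ = ‖π (ι v - w)‖ := by rw [map_sub, hπι]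
          _ ≤ ‖ι v - w‖ := hπ _
      calc dist v (π w) ≤ dist (ι v) w := this
        _ < ε' := hwd
        _ ≤ ε / 2 := hε'le
        _ < ε := by linarith
    exact lt_of_le_of_lt (Metric.infDist_le_dist_of_mem hπw) hdist2

section Prod

variable (𝕜 X Y : Type*) [RCLike 𝕜] [NormedAddCommGroup X] [NormedSpace 𝕜 X]
  [NormedAddCommGroup Y] [NormedSpace 𝕜 Y]

/-- The inclusion of the first factor into the sup product. -/
noncomputable def inlLp : X →L[𝕜] WithLp ⊤ (X × Y) :=
  ((WithLp.prodContinuousLinearEquiv ⊤ 𝕜 X Y).symm :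
    (X × Y) →L[𝕜] WithLp ⊤ (X × Y)).comp (ContinuousLinearMap.inl 𝕜 X Y)

/-- The inclusion of the second factor into the sup product. -/
noncomputable def inrLp : Y →L[𝕜] WithLp ⊤ (X × Y) :=
  ((WithLp.prodContinuousLinearEquiv ⊤ 𝕜 X Y).symm :
    (X × Y) →L[𝕜] WithLp ⊤ (X × Y)).comp (ContinuousLinearMap.inr 𝕜 X Y)

/-- The projection onto the first factor of the sup product. -/
noncomputable def fstLp : WithLp ⊤ (X × Y) →L[𝕜] X :=
  (ContinuousLinearMap.fst 𝕜 X Y).comp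
    ((WithLp.prodContinuousLinearEquiv ⊤ 𝕜 X Y : WithLp ⊤ (X × Y) →L[𝕜] (X × Y)))

/-- The projection onto the second factor of the sup product. -/
noncomputable def sndLp : WithLp ⊤ (X × Y) →L[𝕜] Y :=
  (ContinuousLinearMap.snd 𝕜 X Y).comp
    ((WithLp.prodContinuousLinearEquiv ⊤ 𝕜 X Y : WithLp ⊤ (X × Y) →L[𝕜] (X × Y)))

lemma inlLp_apply (x : X) : inlLp 𝕜 X Y x = (WithLp.equiv ⊤ (X × Y)).symm (x, 0) := rfl
lemma inrLp_apply (y : Y) : inrLp 𝕜 X Y y = (WithLp.equiv ⊤ (X × Y)).symm (0, y) := rfl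
lemma fstLp_apply (z : WithLp ⊤ (X × Y)) : fstLp 𝕜 X Y z = (WithLp.equiv ⊤ (X × Y) z).1 := rfl
lemma sndLp_apply (z : WithLp ⊤ (X × Y)) : sndLp 𝕜 X Y z = (WithLp.equiv ⊤ (X × Y) z).2 := rfl

lemma norm_inlLp (x : X) : ‖inlLp 𝕜 X Y x‖ = ‖x‖ := WithLp.norm_toLp_fst ⊤ X Y x
lemma norm_inrLp (y : Y) : ‖inrLp 𝕜 X Y y‖ = ‖y‖ := WithLp.norm_toLp_snd ⊤ X Y y

lemma norm_fstLp_le (z : WithLp ⊤ (X × Y)) : ‖fstLp 𝕜 X Y z‖ ≤ ‖z‖ := by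
  rw [WithLp.prod_norm_eq_sup]; exact le_sup_left

lemma norm_sndLp_le (z : WithLp ⊤ (X × Y)) : ‖sndLp 𝕜 X Y z‖ ≤ ‖z‖ := by
  rw [WithLp.prod_norm_eq_sup]; exact le_sup_right

lemma inl_add_inr (x : X) (y : Y) :
    inlLp 𝕜 X Y x + inrLp 𝕜 X Y y = (WithLp.equiv ⊤ (X × Y)).symm (x, y) := by
  rw [inlLp_apply, inrLp_apply, WithLp.equiv_symm_apply, ← WithLp.toLp_add]
  exact congrArg _ (Prod.ext (by simp) (by simp))

lemma sub_inl_fst (z : WithLp ⊤ (X × Y)) :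
    z - inlLp 𝕜 X Y (fstLp 𝕜 X Y z) = inrLp 𝕜 X Y (sndLp 𝕜 X Y z) := by
  apply (WithLp.equiv ⊤ (X × Y)).injective
  rw [show ∀ a b : WithLp ⊤ (X × Y), WithLp.equiv ⊤ (X × Y) (a - b) =
      WithLp.equiv ⊤ (X × Y) a - WithLp.equiv ⊤ (X × Y) b from fun _ _ => rfl]
  rw [inlLp_apply, inrLp_apply, fstLp_apply, sndLp_apply]
  simp only [Equiv.apply_symm_apply]
  exact Prod.ext (by simp) (by simp)

lemma sub_inr_snd (z : WithLp ⊤ (X × Y)) :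
    z - inrLp 𝕜 X Y (sndLp 𝕜 X Y z) = inlLp 𝕜 X Y (fstLp 𝕜 X Y z) := by
  apply (WithLp.equiv ⊤ (X × Y)).injective
  rw [show ∀ a b : WithLp ⊤ (X × Y), WithLp.equiv ⊤ (X × Y) (a - b) =
      WithLp.equiv ⊤ (X × Y) a - WithLp.equiv ⊤ (X × Y) b from fun _ _ => rfl]
  rw [inlLp_apply, inrLp_apply, fstLp_apply, sndLp_apply]
  simp only [Equiv.apply_symm_apply]
  exact Prod.ext (by simp) (by simp)

/-- The `ℓ₁` estimate for functionals on an `ℓ∞` sum. -/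
lemma opNorm_comp_inl_add_opNorm_comp_inr (F : WithLp ⊤ (X × Y) →L[𝕜] 𝕜) :
    ‖F.comp (inlLp 𝕜 X Y)‖ + ‖F.comp (inrLp 𝕜 X Y)‖ ≤ ‖F‖ := by
  set f := F.comp (inlLp 𝕜 X Y) with hfdef
  set g := F.comp (inrLp 𝕜 X Y) with hgdef
  refine le_of_forall_pos_le_add fun δ hδ => ?_
  obtain ⟨x, hx1, hx2⟩ := f.exists_lt_apply_of_lt_opNorm (r := ‖f‖ - δ/2) (by linarith)
  obtain ⟨y, hy1, hy2⟩ := g.exists_lt_apply_of_lt_opNorm (r := ‖g‖ - δ/2) (by linarith)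
  obtain ⟨ω₁, hω₁, hω₁'⟩ := exists_unit_mul_eq_norm (f x)
  obtain ⟨ω₂, hω₂, hω₂'⟩ := exists_unit_mul_eq_norm (g y)
  set z : WithLp ⊤ (X × Y) := inlLp 𝕜 X Y (ω₁ • x) + inrLp 𝕜 X Y (ω₂ • y) with hzdef
  have hznorm : ‖z‖ ≤ 1 := by
    rw [hzdef, inl_add_inr, WithLp.prod_norm_eq_sup]
    have h1 : ‖ω₁ • x‖ ≤ 1 := by
      rw [norm_smul, hω₁, one_mul]; exact le_of_lt hx1
    have h2 : ‖ω₂ • y‖ ≤ 1 := by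
      rw [norm_smul, hω₂, one_mul]; exact le_of_lt hy1
    exact sup_le h1 h2
  have hFz : F z = ((‖f x‖ + ‖g y‖ : ℝ) : 𝕜) := by
    rw [hzdef, map_add]
    have e1 : F (inlLp 𝕜 X Y (ω₁ • x)) = ω₁ * f x := by
      rw [hfdef]
      simp only [ContinuousLinearMap.comp_apply, map_smul, smul_eq_mul]
    have e2 : F (inrLp 𝕜 X Y (ω₂ • y)) = ω₂ * g y := by
      rw [hgdef]
      simp only [ContinuousLinearMap.comp_apply, map_smul, smul_eq_mul]
    rw [e1, e2, hω₁', hω₂', RCLike.ofReal_add]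
  have hFz2 : ‖f x‖ + ‖g y‖ ≤ ‖F‖ := by
    have h1 : ‖F z‖ ≤ ‖F‖ * ‖z‖ := F.le_opNorm z
    have h2 : ‖F z‖ = ‖f x‖ + ‖g y‖ := by
      rw [hFz, RCLike.norm_ofReal, abs_of_nonneg (by positivity)]
    nlinarith [norm_nonneg F, F.opNorm_nonneg]
  linarith

end Prod

/-- If `X ⊕_∞ Y` (the product with norm `‖(x,y)‖ = max (‖x‖, ‖y‖)`, i.e. `WithLp ⊤ (X × Y)`)
is lush, then both `X` and `Y` are lush. -/
theorem isLush_of_isLush_prod_sup {𝕜 X Y : Type*} [RCLike 𝕜]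
    [NormedAddCommGroup X] [NormedSpace 𝕜 X] [CompleteSpace X] [Nontrivial X]
    [NormedAddCommGroup Y] [NormedSpace 𝕜 Y] [CompleteSpace Y] [Nontrivial Y]
    (h : IsLush 𝕜 (WithLp ⊤ (X × Y))) : IsLush 𝕜 X ∧ IsLush 𝕜 Y := by
  constructor
  · refine isLush_of_retract h (inlLp 𝕜 X Y) (fstLp 𝕜 X Y) (fun x => rfl)
      (norm_inlLp 𝕜 X Y) (norm_fstLp_le 𝕜 X Y) ?_
    intro F hF z hz
    have e : F z - F (inlLp 𝕜 X Y (fstLp 𝕜 X Y z)) = F (inrLp 𝕜 X Y (sndLp 𝕜 X Y z)) := by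
      rw [← map_sub, sub_inl_fst]
    rw [e]
    have h2 : ‖sndLp 𝕜 X Y z‖ ≤ 1 := le_trans (norm_sndLp_le 𝕜 X Y z) hz
    have h1 : ‖F (inrLp 𝕜 X Y (sndLp 𝕜 X Y z))‖ ≤ ‖F.comp (inrLp 𝕜 X Y)‖ := by
      calc ‖F (inrLp 𝕜 X Y (sndLp 𝕜 X Y z))‖
          = ‖(F.comp (inrLp 𝕜 X Y)) (sndLp 𝕜 X Y z)‖ := rfl
        _ ≤ ‖F.comp (inrLp 𝕜 X Y)‖ * ‖sndLp 𝕜 X Y z‖ := ContinuousLinearMap.le_opNorm _ _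
        _ ≤ ‖F.comp (inrLp 𝕜 X Y)‖ * 1 :=
            mul_le_mul_of_nonneg_left h2 (ContinuousLinearMap.opNorm_nonneg _)
        _ = ‖F.comp (inrLp 𝕜 X Y)‖ := mul_one _
    have hkey := opNorm_comp_inl_add_opNorm_comp_inr 𝕜 X Y F
    rw [hF] at hkey
    linarith
  · refine isLush_of_retract h (inrLp 𝕜 X Y) (sndLp 𝕜 X Y) (fun y => rfl)
      (norm_inrLp 𝕜 X Y) (norm_sndLp_le 𝕜 X Y) ?_
    intro F hF z hz
    have e : F z - F (inrLp 𝕜 X Y (sndLp 𝕜 X Y z)) = F (inlLp 𝕜 X Y (fstLp 𝕜 X Y z)) := by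
      rw [← map_sub, sub_inr_snd]
    rw [e]
    have h2 : ‖fstLp 𝕜 X Y z‖ ≤ 1 := le_trans (norm_fstLp_le 𝕜 X Y z) hz
    have h1 : ‖F (inlLp 𝕜 X Y (fstLp 𝕜 X Y z))‖ ≤ ‖F.comp (inlLp 𝕜 X Y)‖ := by
      calc ‖F (inlLp 𝕜 X Y (fstLp 𝕜 X Y z))‖
          = ‖(F.comp (inlLp 𝕜 X Y)) (fstLp 𝕜 X Y z)‖ := rfl
        _ ≤ ‖F.comp (inlLp 𝕜 X Y)‖ * ‖fstLp 𝕜 X Y z‖ := ContinuousLinearMap.le_opNorm _ _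
        _ ≤ ‖F.comp (inlLp 𝕜 X Y)‖ * 1 :=
            mul_le_mul_of_nonneg_left h2 (ContinuousLinearMap.opNorm_nonneg _)
        _ = ‖F.comp (inlLp 𝕜 X Y)‖ := mul_one _
    have hkey := opNorm_comp_inl_add_opNorm_comp_inr 𝕜 X Y F
    rw [hF] at hkey
    linarith
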